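/- Let q be a non-real zero of P ∈ ℍ[x]. If both q and conj(q) are zeros of P, then every element of the congruence class [q] is a zero of P. -/

import Mathlib

open Polynomial Quaternion

noncomputable def charPoly (q : Quaternion ℝ) : Polynomial (Quaternion ℝ) :=
  (X - C q) * (X - C (star q))

lemma charPoly_eq (q : Quaternion ℝ) :
    charPoly q = X^2 - C ((2 * q.re : ℝ) : Quaternion ℝ) * X + C ((‖q‖^2 : ℝ) : Quaternion ℝ) := by
  have h1 : ((2 * q.re : ℝ) : Quaternion ℝ) = q + star q := by
    ext <;> simp [Quaternion.re_star] <;> ring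
  have h2 : ((‖q‖^2 : ℝ) : Quaternion ℝ) = q * star q := by
    rw [Quaternion.self_mul_star]
    rw [Quaternion.normSq_eq_norm_mul_self, sq]
  rw [charPoly, h1, h2]
  rw [sub_mul, mul_sub, mul_sub, X_mul_C (star q)]
  rw [C_add, add_mul, sq]
  rw [C_mul]; noncomm_ring

lemma charPoly_coeff_coe (q : Quaternion ℝ) (k : ℕ) :
    ∃ r : ℝ, (charPoly q).coeff k = (r : Quaternion ℝ) := by
  rw [charPoly_eq]
  generalize (‖q‖^2 : ℝ) = s
  generalize (2*q.re : ℝ) = t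
  rcases k with _ | _ | _ | n
  · exact ⟨s, by simp⟩
  · exact ⟨-t, by simp [coeff_X_pow]⟩
  · exact ⟨1, by simp [coeff_X_pow]⟩
  · exact ⟨0, by simp [coeff_X_pow, coeff_C]⟩

lemma charPoly_monic (q : Quaternion ℝ) : (charPoly q).Monic :=
  (monic_X_sub_C q).mul (monic_X_sub_C (star q))

lemma charPoly_degree (q : Quaternion ℝ) : (charPoly q).degree = 2 := by
  rw [charPoly, (monic_X_sub_C (star q)).degree_mul, degree_X_sub_C, degree_X_sub_C]
  rfl

lemma eval_mul_charPoly (q : Quaternion ℝ) (f : Polynomial (Quaternion ℝ)) (x : Quaternion ℝ) :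
    (f * charPoly q).eval x = f.eval x * (charPoly q).eval x := by
  show eval₂ (RingHom.id _) x (f * charPoly q) = _
  rw [eval₂_mul_noncomm]
  · rfl
  · intro k
    obtain ⟨r, hr⟩ := charPoly_coeff_coe q k
    simp only [RingHom.id_apply, hr]
    exact Quaternion.coe_commute r x

lemma charPoly_comm (q : Quaternion ℝ) (f : Polynomial (Quaternion ℝ)) :
    charPoly q * f = f * charPoly q := by
  have hC : ∀ r : ℝ, Commute (C ((r : Quaternion ℝ))) f := by
    intro r
    apply Polynomial.ext
    intro k
    rw [coeff_C_mul, coeff_mul_C, Quaternion.coe_commutes]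
  have hX : Commute (X : Polynomial (Quaternion ℝ)) f := commute_X f
  rw [charPoly_eq]
  exact (((hX.pow_left 2).sub_left ((hC _).mul_left hX)).add_left (hC _))

lemma charPoly_eval_zero (q : Quaternion ℝ) (x : Quaternion ℝ) (hre : x.re = q.re)
    (hn : ‖x‖ = ‖q‖) : (charPoly q).eval x = 0 := by
  rw [charPoly_eq, sq]
  simp only [eval_add, eval_sub, eval_mul_X, eval_X, eval_C_mul, eval_C]
  rw [← hre, ← hn]
  have hs : ((2*x.re:ℝ):Quaternion ℝ) = x + star x := by
    ext <;> simp [Quaternion.re_star] <;> ring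
  have hn2 : ((‖x‖^2:ℝ):Quaternion ℝ) = star x * x := by
    rw [Quaternion.star_mul_self, Quaternion.normSq_eq_norm_mul_self, sq]
  have key : x*x - (x + star x)*x + star x * x = 0 := by
    rw [add_mul]; noncomm_ring
  rw [hs, hn2]; exact key

theorem spherical_zero_of_conj_zero (P : Polynomial (Quaternion ℝ)) (q : Quaternion ℝ)
    (hq : q.im ≠ 0) (h1 : P.eval q = 0) (h2 : P.eval (star q) = 0) :
    ∀ p : Quaternion ℝ, p.re = q.re → ‖p‖ = ‖q‖ → P.eval p = 0 := by
  intro p hre hnorm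
  set c := charPoly q with hc
  set Q := P /ₘ c with hQ
  set R := P %ₘ c with hR
  have hP : P = R + Q * c := by
    rw [← charPoly_comm q Q]
    exact (P.modByMonic_add_div (charPoly q)).symm
  have heval : ∀ x : Quaternion ℝ, P.eval x = R.eval x + Q.eval x * c.eval x := by
    intro x
    conv_lhs => rw [hP]
    rw [eval_add, eval_mul_charPoly]
  -- R has degree ≤ 1
  have hdeg : R.degree ≤ 1 := by
    have := degree_modByMonic_lt P (charPoly_monic q)
    rw [charPoly_degree] at this
    exact Order.le_of_lt_succ (by exact_mod_cast this)
  have hRform := eq_X_add_C_of_degree_le_one hdeg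
  set a := R.coeff 1
  set b := R.coeff 0
  have hevalR : ∀ x : Quaternion ℝ, R.eval x = a * x + b := by
    intro x
    conv_lhs => rw [hRform]
    simp [eval_C_mul]
  -- eval at q and star q
  have hq1 : a * q + b = 0 := by
    have := heval q
    rw [h1, charPoly_eval_zero q q rfl rfl, mul_zero, add_zero, hevalR] at this
    exact this.symm
  have hq2 : a * star q + b = 0 := by
    have := heval (star q)
    rw [h2, charPoly_eval_zero q (star q) (by simp [Quaternion.re_star]) (by simp), mul_zero,
      add_zero, hevalR] at this
    exact this.symm
  have hsub : a * (q - star q) = 0 := by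
    calc a * (q - star q) = (a * q + b) - (a * star q + b) := by noncomm_ring
      _ = 0 := by rw [hq1, hq2, sub_zero]
  have hne : q - star q ≠ 0 := by
    intro h
    apply hq
    have h' : q = star q := by rwa [sub_eq_zero] at h
    have : star q = q := h'.symm
    rw [Quaternion.star_eq_self] at this
    have := congrArg Quaternion.im this
    simpa using this
  have ha : a = 0 := by
    rcases mul_eq_zero.mp hsub with h | h
    · exact h
    · exact absurd h hne
  have hb : b = 0 := by
    have := hq1
    rw [ha, zero_mul, zero_add] at this
    exact this
  rw [heval p, charPoly_eval_zero q p hre hnorm, mul_zero, add_zero, hevalR, ha, hb,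
    zero_mul, zero_add]
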